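/- Let D ⊆ ℂ be a domain, E ⊆ D, α a countable ordinal number, and z₀ ∈ E_D^(α). Then there exists a subset Ê ⊆ E such that Ê_D^(α) = {z₀}. -/

import Mathlib

open Filter Set Metric Topology

noncomputable def derivIter (A : Set ℂ) (E : Set ℂ) (o : Ordinal) : Set ℂ :=
  Ordinal.limitRecOn o E
    (fun _ ih => {z | z ∈ A ∧ AccPt z (Filter.principal ih)})
    (fun o _ ih => ⋂ (β : Ordinal) (h : β < o) (_ : 1 ≤ β), ih β h)

lemma derivIter_zero (A E : Set ℂ) : derivIter A E 0 = E :=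
  Ordinal.limitRecOn_zero _ _ _

lemma derivIter_succ (A E : Set ℂ) (o : Ordinal) :
    derivIter A E (Order.succ o) = {z | z ∈ A ∧ AccPt z (𝓟 (derivIter A E o))} :=
  Ordinal.limitRecOn_succ _ _ _ _

lemma derivIter_limit (A E : Set ℂ) {o : Ordinal} (ho : Order.IsSuccLimit o) :
    derivIter A E o = ⋂ (β : Ordinal) (_ : β < o) (_ : 1 ≤ β), derivIter A E β :=
  Ordinal.limitRecOn_limit _ _ _ _ ho

lemma derivIter_mono (A : Set ℂ) {E F : Set ℂ} (h : E ⊆ F) (o : Ordinal) :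
    derivIter A E o ⊆ derivIter A F o := by
  induction o using Ordinal.induction with
  | h o IH =>
    rcases Ordinal.zero_or_succ_or_isSuccLimit o with rfl | ⟨p, rfl⟩ | ho
    · rw [derivIter_zero, derivIter_zero]; exact h
    · rw [derivIter_succ, derivIter_succ]
      rintro z ⟨hzA, hz⟩
      exact ⟨hzA, hz.mono (principal_mono.2 (IH p (Order.lt_succ p)))⟩
    · rw [derivIter_limit A E ho, derivIter_limit A F ho]
      intro z hz
      simp only [mem_iInter] at hz ⊢
      exact fun β hβ h1 => IH β hβ (hz β hβ h1)

lemma derivIter_inter_open (A : Set ℂ) {U : Set ℂ} (hU : IsOpen U) (E : Set ℂ) (o : Ordinal) :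
    derivIter A E o ∩ U ⊆ derivIter A (E ∩ U) o := by
  induction o using Ordinal.induction with
  | h o IH =>
    rcases Ordinal.zero_or_succ_or_isSuccLimit o with rfl | ⟨p, rfl⟩ | ho
    · rw [derivIter_zero, derivIter_zero]
    · rw [derivIter_succ, derivIter_succ]
      rintro z ⟨⟨hzA, hz⟩, hzU⟩
      refine ⟨hzA, ?_⟩
      have h1 : AccPt z (𝓟 (derivIter A E p ∩ U)) := by
        have hUnhds : 𝓝[≠] z ≤ 𝓟 U :=
          le_trans nhdsWithin_le_nhds (le_principal_iff.2 (hU.mem_nhds hzU))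
      -- AccPt z (𝓟 S) means (𝓝[≠] z ⊓ 𝓟 S).NeBot
        have hle : 𝓝[≠] z ⊓ 𝓟 (derivIter A E p) ≤ 𝓝[≠] z ⊓ 𝓟 (derivIter A E p ∩ U) := by
          rw [← inf_principal, ← inf_assoc]
          exact le_inf le_rfl (le_trans inf_le_left hUnhds)
        exact @Filter.neBot_of_le _ _ _ hz hle
      exact (h1.mono (principal_mono.2 (IH p (Order.lt_succ p)))).mono le_rfl
    · rw [derivIter_limit A E ho, derivIter_limit A (E ∩ U) ho]
      rintro z ⟨hz, hzU⟩
      simp only [mem_iInter] at hz ⊢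
      exact fun β hβ h1 => IH β hβ ⟨hz β hβ h1, hzU⟩

lemma acc_of_acc_acc {x : ℂ} {C : Set ℂ} (h : AccPt x (𝓟 {y | AccPt y (𝓟 C)})) :
    AccPt x (𝓟 C) := by
  rw [accPt_iff_nhds] at h ⊢
  intro U hU
  obtain ⟨V, hVU, hVopen, hxV⟩ := _root_.mem_nhds_iff.1 hU
  obtain ⟨y, ⟨hyV, hy⟩, hyx⟩ := h V (hVopen.mem_nhds hxV)
  replace hy := accPt_iff_nhds.1 hy
  have hmem : V \ {x} ∈ 𝓝 y :=
    (hVopen.sdiff isClosed_singleton).mem_nhds ⟨hyV, hyx⟩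
  obtain ⟨w, ⟨⟨hwV, hwx⟩, hwC⟩, _⟩ := hy _ hmem
  exact ⟨w, ⟨hVU hwV, hwC⟩, hwx⟩

lemma derivIter_succ_subset (A E : Set ℂ) {o : Ordinal} (ho : 1 ≤ o) :
    derivIter A E (Order.succ o) ⊆ derivIter A E o := by
  induction o using Ordinal.induction with
  | h o IH =>
    rcases Ordinal.zero_or_succ_or_isSuccLimit o with rfl | ⟨p, rfl⟩ | hlim
    · exact absurd ho (by simp)
    · rw [derivIter_succ, derivIter_succ]
      rintro z ⟨hzA, hz⟩
      refine ⟨hzA, acc_of_acc_acc (hz.mono (principal_mono.2 ?_))⟩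
      exact fun w hw => hw.2
    · intro z hz
      rw [derivIter_limit A E hlim]
      simp only [mem_iInter]
      intro β hβ h1
      have h2 : derivIter A E (Order.succ o) ⊆ derivIter A E (Order.succ β) := by
        rw [derivIter_succ, derivIter_succ]
        rintro w ⟨hwA, hw⟩
        refine ⟨hwA, hw.mono (principal_mono.2 ?_)⟩
        rw [derivIter_limit A E hlim]
        exact fun u hu => by simp only [mem_iInter] at hu; exact hu β hβ h1
      have h3 : derivIter A E (Order.succ β) ⊆ derivIter A E β := IH β hβ h1
      exact h3 (h2 hz)

lemma derivIter_antitone (A E : Set ℂ) {β γ : Ordinal} (h1 : 1 ≤ β) (h : β ≤ γ) :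
    derivIter A E γ ⊆ derivIter A E β := by
  induction γ using Ordinal.induction with
  | h γ IH =>
    rcases eq_or_lt_of_le h with rfl | hlt
    · exact le_rfl
    rcases Ordinal.zero_or_succ_or_isSuccLimit γ with rfl | ⟨p, rfl⟩ | hlim
    · exact absurd hlt (by simp)
    · have hβp : β ≤ p := Order.lt_succ_iff.1 hlt
      exact (derivIter_succ_subset A E (h1.trans hβp)).trans (IH p (Order.lt_succ p) hβp)
    · rw [derivIter_limit A E hlim]
      exact fun z hz => by simp only [mem_iInter] at hz; exact hz β hlt h1

lemma derivIter_empty (A : Set ℂ) {o : Ordinal} (ho : 1 ≤ o) : derivIter A (∅ : Set ℂ) o = ∅ := by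
  have h1 : derivIter A (∅ : Set ℂ) 1 = ∅ := by
    have : (1 : Ordinal) = Order.succ 0 := by simp
    rw [this, derivIter_succ, derivIter_zero]
    ext z
    simp only [mem_setOf_eq, mem_empty_iff_false, iff_false, not_and]
    intro _ h
    rw [principal_empty] at h
    exact h.ne (inf_bot_eq _)
  exact subset_empty_iff.1 ((derivIter_antitone A ∅ le_rfl ho).trans h1.subset)

lemma not_accPt_singleton (x y : ℂ) : ¬ AccPt x (𝓟 ({y} : Set ℂ)) := by
  intro h
  rw [accPt_iff_nhds] at h
  rcases eq_or_ne y x with rfl | hyx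
  · obtain ⟨w, ⟨_, hw⟩, hwx⟩ := h univ univ_mem
    exact hwx (by simpa using hw)
  · obtain ⟨w, ⟨hwb, hw⟩, hwx⟩ := h (ball x (dist y x)) (ball_mem_nhds _ (by simpa [dist_pos] using hyx))
    rw [mem_singleton_iff] at hw
    subst hw
    exact absurd hwb (by simp)

lemma derivIter_union (A : Set ℂ) (E F : Set ℂ) (o : Ordinal) :
    derivIter A (E ∪ F) o ⊆ derivIter A E o ∪ derivIter A F o := by
  induction o using Ordinal.induction with
  | h o IH =>
    rcases Ordinal.zero_or_succ_or_isSuccLimit o with rfl | ⟨p, rfl⟩ | hlim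
    · rw [derivIter_zero, derivIter_zero, derivIter_zero]
    · rw [derivIter_succ, derivIter_succ, derivIter_succ]
      rintro z ⟨hzA, hz⟩
      have h2 : AccPt z (𝓟 (derivIter A E p ∪ derivIter A F p)) :=
        hz.mono (principal_mono.2 (IH p (Order.lt_succ p)))
      rw [← sup_principal] at h2
      rcases accPt_sup.1 h2 with h | h
      · exact Or.inl ⟨hzA, h⟩
      · exact Or.inr ⟨hzA, h⟩
    · intro z hz
      have hz' : ∀ β, 1 ≤ β → β < o → z ∈ derivIter A E β ∪ derivIter A F β := by
        intro β h1 hβ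
        have := (derivIter_limit A (E ∪ F) hlim ▸ hz)
        simp only [mem_iInter] at this
        exact IH β hβ (this β hβ h1)
      by_cases hE : ∀ β, 1 ≤ β → β < o → z ∈ derivIter A E β
      · left
        rw [derivIter_limit A E hlim]
        simp only [mem_iInter]
        exact fun β hβ h1 => hE β h1 hβ
      · right
        push_neg at hE
        obtain ⟨β₀, h1β₀, hβ₀o, hβ₀⟩ := hE
        rw [derivIter_limit A F hlim]
        simp only [mem_iInter]
        intro β hβ h1
        have hm : max β β₀ < o := max_lt hβ hβ₀o
        have h1m : (1 : Ordinal) ≤ max β β₀ := h1.trans (le_max_left _ _)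
        rcases hz' _ h1m hm with h | h
        · exact absurd (derivIter_antitone A E h1β₀ (le_max_right _ _) h) hβ₀
        · exact derivIter_antitone A F h1 (le_max_left _ _) h

lemma derivIter_biUnion (A : Set ℂ) (s : Finset ℕ) (f : ℕ → Set ℂ) (o : Ordinal) :
    derivIter A (⋃ n ∈ s, f n) o ⊆ ⋃ n ∈ s, derivIter A (f n) o := by
  classical
  induction s using Finset.induction with
  | empty =>
    simp only [Finset.notMem_empty, iUnion_of_empty, iUnion_empty]
    rcases Ordinal.zero_or_succ_or_isSuccLimit o with rfl | ⟨p, rfl⟩ | hlim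
    · rw [derivIter_zero]
    · rw [derivIter_empty A (by simp [Order.one_le_iff_pos])]
    · rw [derivIter_empty A (Order.one_le_iff_pos.2 hlim.pos)]
  | @insert a t ha ih =>
    rw [Finset.set_biUnion_insert]
    refine (derivIter_union A _ _ o).trans ?_
    intro z hz
    rcases hz with h | h
    · exact mem_biUnion (Finset.mem_insert_self a t) h
    · obtain ⟨n, hn, hn2⟩ := mem_iUnion₂.1 (ih h)
      exact mem_biUnion (Finset.mem_insert_of_mem hn) hn2

lemma accPt_of_near (x : ℂ) (S : Set ℂ) (h : ∀ r > 0, ∃ u ∈ S, u ≠ x ∧ dist u x < r) :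
    AccPt x (𝓟 S) := by
  rw [accPt_iff_nhds]
  intro U hU
  obtain ⟨r, hr, hball⟩ := Metric.mem_nhds_iff.1 hU
  obtain ⟨u, hu, hux, hur⟩ := h r hr
  exact ⟨u, ⟨hball (by simpa [mem_ball] using hur), hu⟩, hux⟩

lemma exists_seq (z₀ : ℂ) (S : ℕ → Set ℂ) (hS : ∀ n, AccPt z₀ (𝓟 (S n))) {ε : ℝ} (hε : 0 < ε) :
    ∃ z : ℕ → ℂ, (∀ n, z n ∈ S n) ∧ (∀ n, 0 < dist (z n) z₀) ∧
      (∀ n, dist (z n) z₀ < ε / 2 * (1/2)^n) := by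
  have key : ∀ n : ℕ, ∀ r : ℝ, 0 < r → ∃ w, w ∈ S n ∧ 0 < dist w z₀ ∧ dist w z₀ < r := by
    intro n r hr
    obtain ⟨y, ⟨hyb, hyS⟩, hyx⟩ := accPt_iff_nhds.1 (hS n) (ball z₀ r) (ball_mem_nhds _ hr)
    exact ⟨y, hyS, dist_pos.2 hyx, by simpa [mem_ball] using hyb⟩
  choose F hF1 hF2 hF3 using key
  have hpos : ∀ n : ℕ, (0:ℝ) < ε/2 * (1/2)^n := fun n => by positivity
  exact ⟨fun n => F n _ (hpos n), fun n => hF1 n _ _, fun n => hF2 n _ _, fun n => hF3 n _ _⟩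

lemma geom_facts {ε : ℝ} (hε : 0 < ε) (d : ℕ → ℝ) (hgeo : ∀ n, d n < ε/2*(1/2)^n) :
    (∀ n, d n < ε/2) ∧ (∀ r, 0 < r → ∃ N, ∀ n, N ≤ n → d n < r) := by
  constructor
  · intro n
    have h1 : (1/2:ℝ)^n ≤ 1 := pow_le_one₀ (by norm_num) (by norm_num)
    have := hgeo n
    nlinarith
  · intro r hr
    have htend : Filter.Tendsto (fun n : ℕ => ε/2 * (1/2)^n) atTop (𝓝 0) := by
      have := (tendsto_pow_atTop_nhds_zero_of_lt_one (by norm_num : (0:ℝ) ≤ 1/2)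
        (by norm_num : (1/2:ℝ) < 1)).const_mul (ε/2)
      simpa using this
    obtain ⟨M, hM⟩ := eventually_atTop.1 (htend.eventually (gt_mem_nhds hr))
    exact ⟨M, fun n hn => (hgeo n).trans (hM n hn)⟩

lemma accPt_insert_range {z₀ : ℂ} {z : ℕ → ℂ}
    (hd : ∀ r, 0 < r → ∃ N, ∀ n, N ≤ n → dist (z n) z₀ < r)
    {w : ℂ} (hw : AccPt w (𝓟 (insert z₀ (Set.range z)))) : w = z₀ := by
  by_contra hne
  set c := dist w z₀ with hc
  have hc0 : 0 < c := dist_pos.2 hne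
  obtain ⟨N, hN⟩ := hd (c/2) (by positivity)
  set f : ℕ → ℝ := fun n => if z n = w then c/2 else dist (z n) w with hf
  have hfpos : ∀ n ∈ Finset.range (N+1), 0 < f n := by
    intro n _
    simp only [hf]
    split
    · positivity
    · next h => exact dist_pos.2 h
  set δ : ℝ := min (c/2) ((Finset.range (N+1)).inf' (by simp) f) with hδ
  have hδ0 : 0 < δ := lt_min (by positivity) (by rw [Finset.lt_inf'_iff]; exact hfpos)
  have hδc : δ ≤ c/2 := min_le_left _ _
  obtain ⟨y, ⟨hyb, hyT⟩, hyw⟩ := accPt_iff_nhds.1 hw (ball w δ) (ball_mem_nhds _ hδ0)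
  have hyb' : dist y w < δ := by simpa [mem_ball] using hyb
  rcases hyT with rfl | ⟨m, rfl⟩
  · have h1 : dist y w = c := by rw [hc, dist_comm]
    linarith
  · have htri : c ≤ dist w (z m) + dist (z m) z₀ := dist_triangle _ _ _
    have h2 : dist (z m) w < δ := hyb'
    have h3 : ¬ (N ≤ m) := by
      intro hNm
      have := hN m hNm
      rw [dist_comm w (z m)] at htri
      linarith
    have hm : m ∈ Finset.range (N+1) := Finset.mem_range.2 (by omega)
    have h4 : δ ≤ f m := le_trans (min_le_right _ _) (Finset.inf'_le f hm)
    rw [hf] at h4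
    simp only at h4
    rw [if_neg hyw] at h4
    linarith

lemma main_lemma (D : Set ℂ) : ∀ (α : Ordinal), α.card ≤ Cardinal.aleph0 →
    ∀ (E : Set ℂ) (z₀ : ℂ), z₀ ∈ derivIter D E α → ∀ ε : ℝ, 0 < ε →
    ∃ Ehat : Set ℂ, Ehat ⊆ E ∩ ball z₀ ε ∧ derivIter D Ehat α = {z₀} := by
  intro α
  induction α using Ordinal.induction with
  | h α IH =>
  intro hα E z₀ hz₀ ε hε
  rcases Ordinal.zero_or_succ_or_isSuccLimit α with rfl | ⟨β, rfl⟩ | hlim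
  · rw [derivIter_zero] at hz₀
    refine ⟨{z₀}, ?_, derivIter_zero _ _⟩
    intro w hw
    rw [mem_singleton_iff] at hw
    subst hw
    exact ⟨hz₀, mem_ball_self hε⟩
  · -- successor case
    rw [derivIter_succ] at hz₀
    obtain ⟨hz₀D, hacc⟩ := hz₀
    obtain ⟨z, hzS, hzpos, hgeo⟩ :=
      exists_seq z₀ (fun _ => derivIter D E β) (fun _ => hacc) hε
    set d : ℕ → ℝ := fun n => dist (z n) z₀ with hd
    obtain ⟨hzlt, hsmall⟩ := geom_facts hε d hgeo
    have hβcard : β.card ≤ Cardinal.aleph0 :=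
      le_trans (Ordinal.card_le_card (le_of_lt (Order.lt_succ β))) hα
    have hIH : ∀ n : ℕ, ∃ Eh : Set ℂ, Eh ⊆ E ∩ ball (z n) (d n / 4) ∧
        derivIter D Eh β = {z n} :=
      fun n => IH β (Order.lt_succ β) hβcard E (z n) (hzS n) _ (by
        have := hzpos n; positivity)
    choose Eh hEsub hEeq using hIH
    have hEball : ∀ n, ∀ u ∈ Eh n, dist u z₀ < 5/4 * d n := by
      intro n u hu
      have h1 : dist u (z n) < d n / 4 := by simpa [mem_ball] using (hEsub n hu).2
      calc dist u z₀ ≤ dist u (z n) + dist (z n) z₀ := dist_triangle _ _ _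
        _ < d n / 4 + d n := by simp only [hd]; linarith
        _ = 5/4 * d n := by ring
    refine ⟨⋃ n, Eh n, ?_, ?_⟩
    · intro u hu
      obtain ⟨n, hn⟩ := mem_iUnion.1 hu
      refine ⟨(hEsub n hn).1, ?_⟩
      rw [mem_ball]
      have h1 := hEball n u hn
      have h2 := hzlt n
      have h3 := hzpos n
      nlinarith
    · -- derivIter D (⋃ n, Eh n) (succ β) = {z₀}
      have hstep1 : derivIter D (⋃ n, Eh n) β ⊆ insert z₀ (Set.range z) := by
        rcases eq_or_ne β 0 with rfl | hβ0
        · rw [derivIter_zero]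
          intro u hu
          obtain ⟨n, hn⟩ := mem_iUnion.1 hu
          have he : Eh n = {z n} := by rw [← derivIter_zero D (Eh n), hEeq n]
          rw [he, mem_singleton_iff] at hn
          exact Or.inr ⟨n, hn.symm⟩
        · intro w hw
          by_contra hwT
          have hwz₀ : w ≠ z₀ := fun h => hwT (Or.inl h)
          set c := dist w z₀ with hc
          have hc0 : 0 < c := dist_pos.2 hwz₀
          obtain ⟨N, hN⟩ := hsmall (2/5 * c) (by positivity)
          set U := {u : ℂ | c/2 < dist u z₀} with hU
          have hUopen : IsOpen U :=
            isOpen_lt continuous_const (continuous_id.dist continuous_const)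
          have hwU : w ∈ U := by simp only [hU, mem_setOf_eq]; linarith
          have hcover : (⋃ n, Eh n) ∩ U ⊆ ⋃ n ∈ Finset.range N, Eh n := by
            rintro u ⟨hu, huU⟩
            obtain ⟨m, hm⟩ := mem_iUnion.1 hu
            refine mem_biUnion (Finset.mem_range.2 ?_) hm
            by_contra hmN
            push_neg at hmN
            have h5 : dist u z₀ < 5/4 * d m := hEball m u hm
            have h6 : d m < 2/5 * c := hN m hmN
            simp only [hU, mem_setOf_eq] at huU
            nlinarith
          have hw2 : w ∈ derivIter D ((⋃ n, Eh n) ∩ U) β :=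
            derivIter_inter_open D hUopen _ β ⟨hw, hwU⟩
          have hw3 : w ∈ ⋃ n ∈ Finset.range N, derivIter D (Eh n) β :=
            derivIter_biUnion D _ Eh β (derivIter_mono D hcover β hw2)
          obtain ⟨n, _, hn2⟩ := mem_iUnion₂.1 hw3
          rw [hEeq n, mem_singleton_iff] at hn2
          exact hwT (Or.inr ⟨n, hn2.symm⟩)
      have hstep2 : ∀ n, z n ∈ derivIter D (⋃ k, Eh k) β := by
        intro n
        apply derivIter_mono D (subset_iUnion Eh n) β
        rw [hEeq n]
        exact mem_singleton _
      rw [derivIter_succ]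
      ext w
      simp only [mem_setOf_eq, mem_singleton_iff]
      constructor
      · rintro ⟨hwD, hwacc⟩
        exact accPt_insert_range hsmall (hwacc.mono (principal_mono.2 hstep1))
      · rintro rfl
        refine ⟨hz₀D, accPt_of_near _ _ ?_⟩
        intro r hr
        obtain ⟨N, hN⟩ := hsmall r hr
        exact ⟨z N, hstep2 N, fun h => (hzpos N).ne' (by rw [h] at *; simpa [hd] using hzpos N),
          hN N le_rfl⟩
  · -- limit case
    have hmem : ∀ γ, 1 ≤ γ → γ < α → z₀ ∈ derivIter D E γ := by
      intro γ h1 hγ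
      have h := derivIter_limit D E hlim ▸ hz₀
      simp only [mem_iInter] at h
      exact h γ hγ h1
    have h1α : (1:Ordinal) < α := Ordinal.one_lt_of_isSuccLimit hlim
    have hz₀D : z₀ ∈ D := by
      have h := hmem 1 le_rfl h1α
      rw [show (1:Ordinal) = Order.succ 0 by simp, derivIter_succ] at h
      exact h.1
    have hcount : (Set.Iio α).Countable := by
      rw [← Set.countable_coe_iff, ← Cardinal.mk_le_aleph0_iff, Ordinal.mk_Iio_ordinal,
        Cardinal.lift_le_aleph0]
      exact hα
    obtain ⟨g, hg⟩ := hcount.exists_eq_range ⟨0, hlim.pos⟩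
    have hglt : ∀ n, g n < α := fun n => by
      have : g n ∈ Set.Iio α := hg ▸ mem_range_self n
      exact this
    set βs : ℕ → Ordinal := fun n => (Finset.range (n+1)).sup g with hβs
    have hβlt : ∀ n, βs n < α := by
      intro n
      refine (Finset.sup_lt_iff ?_).2 fun b _ => hglt b
      rw [Ordinal.bot_eq_zero]
      exact hlim.pos
    have hβcof : ∀ γ, γ < α → ∃ N, ∀ n, N ≤ n → γ ≤ βs n := by
      intro γ hγ
      have hγr : γ ∈ Set.range g := by rw [← hg]; exact hγ
      obtain ⟨N, hN⟩ := hγr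
      refine ⟨N, fun n hn => ?_⟩
      calc γ = g N := hN.symm
        _ ≤ βs n := Finset.le_sup (Finset.mem_range.2 (by omega))
    have haccS : ∀ n, AccPt z₀ (𝓟 (derivIter D E (βs n))) := by
      intro n
      have h1 : z₀ ∈ derivIter D E (Order.succ (βs n)) :=
        hmem _ (Order.one_le_iff_pos.2 ((zero_le (a := _)).trans_lt (Order.lt_succ _)))
          (hlim.succ_lt (hβlt n))
      rw [derivIter_succ] at h1
      exact h1.2
    obtain ⟨z, hzS, hzpos, hgeo⟩ :=
      exists_seq z₀ (fun n => derivIter D E (βs n)) haccS hε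
    set d : ℕ → ℝ := fun n => dist (z n) z₀ with hd
    obtain ⟨hzlt, hsmall⟩ := geom_facts hε d hgeo
    have hIH : ∀ n : ℕ, ∃ Eh : Set ℂ, Eh ⊆ E ∩ ball (z n) (d n / 4) ∧
        derivIter D Eh (βs n) = {z n} :=
      fun n => IH (βs n) (hβlt n) (le_trans (Ordinal.card_le_card (le_of_lt (hβlt n))) hα)
        E (z n) (hzS n) _ (by have := hzpos n; positivity)
    choose Eh hEsub hEeq using hIH
    have hEball : ∀ n, ∀ u ∈ Eh n, dist u z₀ < 5/4 * d n := by
      intro n u hu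
      have h1 : dist u (z n) < d n / 4 := by simpa [mem_ball] using (hEsub n hu).2
      calc dist u z₀ ≤ dist u (z n) + dist (z n) z₀ := dist_triangle _ _ _
        _ < d n / 4 + d n := by simp only [hd]; linarith
        _ = 5/4 * d n := by ring
    have hEhne : ∀ n, (Eh n).Nonempty := by
      intro n
      by_contra h
      rw [not_nonempty_iff_eq_empty] at h
      have he := hEeq n
      rw [h] at he
      rcases eq_or_ne (βs n) 0 with h0 | h0
      · rw [h0, derivIter_zero] at he
        exact (singleton_ne_empty (z n)) he.symm
      · rw [derivIter_empty D (Order.one_le_iff_pos.2 (pos_iff_ne_zero.2 h0))] at he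
        exact (singleton_ne_empty (z n)) he.symm
    have huball : ∀ n, ∀ u ∈ Eh n, u ≠ z₀ := by
      intro n u hu he
      have h1 : dist u (z n) < d n / 4 := by simpa [mem_ball] using (hEsub n hu).2
      have h2 : d n ≤ dist (z n) u + dist u z₀ := dist_triangle _ _ _
      rw [he, dist_self] at *
      rw [dist_comm] at h1
      have := hzpos n
      simp only [hd] at *
      linarith
    refine ⟨⋃ n, Eh n, ?_, ?_⟩
    · intro u hu
      obtain ⟨n, hn⟩ := mem_iUnion.1 hu
      refine ⟨(hEsub n hn).1, ?_⟩
      rw [mem_ball]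
      have h1 := hEball n u hn
      have h2 := hzlt n
      have h3 := hzpos n
      nlinarith
    · -- z₀ ∈ Ê^γ for all 1 ≤ γ < α
      have hkey : ∀ γ, 1 ≤ γ → γ < α → z₀ ∈ derivIter D (⋃ n, Eh n) γ := by
        intro γ
        induction γ using Ordinal.induction with
        | h γ IHγ =>
        intro h1 hγ
        rcases Ordinal.zero_or_succ_or_isSuccLimit γ with rfl | ⟨δ, rfl⟩ | hγlim
        · exact absurd h1 (by simp)
        · rw [derivIter_succ]
          refine ⟨hz₀D, accPt_of_near _ _ ?_⟩
          intro r hr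
          rcases eq_or_ne δ 0 with rfl | hδ0
          · rw [derivIter_zero]
            obtain ⟨N, hN⟩ := hsmall (2/5 * r) (by positivity)
            obtain ⟨u, hu⟩ := hEhne N
            refine ⟨u, mem_iUnion.2 ⟨N, hu⟩, huball N u hu, ?_⟩
            have h5 := hEball N u hu
            have h6 := hN N le_rfl
            have h7 := hzpos N
            nlinarith
          · have hδ1 : (1:Ordinal) ≤ δ := Order.one_le_iff_pos.2 (pos_iff_ne_zero.2 hδ0)
            have hδα : δ < α := lt_trans (Order.lt_succ δ) hγ
            obtain ⟨N₁, hN₁⟩ := hβcof δ hδα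
            obtain ⟨N₂, hN₂⟩ := hsmall r hr
            set n := max N₁ N₂ with hn
            refine ⟨z n, ?_, fun h => (hzpos n).ne' (by rw [← h, dist_self]), hN₂ n (le_max_right _ _)⟩
            apply derivIter_mono D (subset_iUnion Eh n) δ
            apply derivIter_antitone D (Eh n) hδ1 (hN₁ n (le_max_left _ _))
            rw [hEeq n]
            exact mem_singleton _
        · rw [derivIter_limit D _ hγlim]
          simp only [mem_iInter]
          intro δ hδ h1δ
          exact IHγ δ hδ h1δ (lt_trans hδ hγ)
      ext w
      simp only [mem_singleton_iff]
      constructor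
      · intro hw
        by_contra hne
        set c := dist w z₀ with hc
        have hc0 : 0 < c := dist_pos.2 hne
        obtain ⟨N, hN⟩ := hsmall (2/5 * c) (by positivity)
        set U := {u : ℂ | c/2 < dist u z₀} with hU
        have hUopen : IsOpen U :=
          isOpen_lt continuous_const (continuous_id.dist continuous_const)
        have hwU : w ∈ U := by simp only [hU, mem_setOf_eq]; linarith
        have hcover : (⋃ n, Eh n) ∩ U ⊆ ⋃ n ∈ Finset.range N, Eh n := by
          rintro u ⟨hu, huU⟩
          obtain ⟨m, hm⟩ := mem_iUnion.1 hu
          refine mem_biUnion (Finset.mem_range.2 ?_) hm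
          by_contra hmN
          push_neg at hmN
          have h5 : dist u z₀ < 5/4 * d m := hEball m u hm
          have h6 : d m < 2/5 * c := hN m hmN
          simp only [hU, mem_setOf_eq] at huU
          nlinarith
        set b := (Finset.range N).sup βs with hb
        have hbα : b < α := by
          refine (Finset.sup_lt_iff ?_).2 fun n _ => hβlt n
          rw [Ordinal.bot_eq_zero]
          exact hlim.pos
        set γ := Order.succ b with hγdef
        have hγα : γ < α := hlim.succ_lt hbα
        have h1γ : (1:Ordinal) ≤ γ :=
          Order.one_le_iff_pos.2 ((zero_le (a := _)).trans_lt (Order.lt_succ _))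
        have hwγ : w ∈ derivIter D (⋃ n, Eh n) γ := by
          rw [derivIter_limit D _ hlim] at hw
          simp only [mem_iInter] at hw
          exact hw γ hγα h1γ
        have hw2 : w ∈ derivIter D ((⋃ n, Eh n) ∩ U) γ :=
          derivIter_inter_open D hUopen _ γ ⟨hwγ, hwU⟩
        have hw3 : w ∈ ⋃ n ∈ Finset.range N, derivIter D (Eh n) γ :=
          derivIter_biUnion D _ Eh γ (derivIter_mono D hcover γ hw2)
        obtain ⟨n, hnN, hn2⟩ := mem_iUnion₂.1 hw3
        have h4 : derivIter D (Eh n) γ ⊆ derivIter D (Eh n) (Order.succ (βs n)) := by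
          apply derivIter_antitone D (Eh n)
            (Order.one_le_iff_pos.2 ((zero_le (a := _)).trans_lt (Order.lt_succ _)))
          exact Order.succ_le_succ (Finset.le_sup hnN)
        have h5 := h4 hn2
        rw [derivIter_succ, hEeq n] at h5
        exact not_accPt_singleton w (z n) h5.2
      · rintro rfl
        rw [derivIter_limit D _ hlim]
        simp only [mem_iInter]
        exact fun γ hγ h1 => hkey γ h1 hγ

theorem stmt_11 (D : Set ℂ) (hD : IsOpen D) (hDc : IsConnected D) (E : Set ℂ) (hE : E ⊆ D)
    (α : Ordinal) (hα : α.card ≤ Cardinal.aleph0) (z₀ : ℂ) (hz₀ : z₀ ∈ derivIter D E α) :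
    ∃ Ehat ⊆ E, derivIter D Ehat α = {z₀} := by
  obtain ⟨Ehat, hsub, heq⟩ := main_lemma D α hα E z₀ hz₀ 1 one_pos
  exact ⟨Ehat, hsub.trans inter_subset_left, heq⟩
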